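/- Fix n ≥ 3, 2 ≤ i ≤ n−1, and α, β ≥ 0 with α ≥ c/(1+δ). Let k ∉ {i−1, i, i+1}, and let x ∈ ℝ^n with y := Wx + θ satisfy: y_k = 0; y_i ≥ α; y_{i−1} ≤ β, y_{i+1} ≤ β; and y_j ≤ 0 for all j ∉ {i−1, i, i+1, k}. Then w_k^⊤(−x + [y]_+) ≤ 0, where w_k^⊤ is the k-th row of W. (Both cases are covered: if k has distance ≥ 2 from {i−1,i,i+1} then w_k^⊤(−x+[y]_+) = c + (−1−δ)([y_{i−1}]_+ + [y_i]_+ + [y_{i+1}]_+) ≤ c − (1+δ)α ≤ 0; if k = i+2, then w_k^⊤(−x+[y]_+) = c + (−1−δ)([y_{i−1}]_+ + [y_i]_+) + (−1+ε)[y_{i+1}]_+ ≤ c − (1+δ)α ≤ 0, and symmetrically for k = i−2.) -/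
import Mathlib


open Matrix

/-- vector field points inward on the boundaries `y_k = 0`,
`k ∉ {i−1,i,i+1}`, of `R_FI^{(i)}`. Indices are 0-based: `1 ≤ i` and
`i + 1 < n` correspond to the 1-based statement `2 ≤ i ≤ n−1`. -/
theorem cstln_inward_on_off_support_boundaries (n i : ℕ) (hn : 3 ≤ n)
    (hi1 : 1 ≤ i) (hi2 : i + 1 < n)
    (ε δ c : ℝ) (hε : 0 < ε) (hε1 : ε < 1) (hδ : 0 < δ) (hc : 0 < c)
    (W : Matrix (Fin n) (Fin n) ℝ)
    (hW : ∀ k l : Fin n, W k l =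
      if (k : ℕ) = (l : ℕ) then 0
      else if ((k : ℤ) - (l : ℤ)).natAbs = 1 then -1 + ε else -1 - δ)
    (α β : ℝ) (hα : 0 ≤ α) (hβ : 0 ≤ β)
    (hfeas : c / (1 + δ) ≤ α)
    (k : Fin n) (hk1 : (k : ℕ) ≠ i - 1) (hk2 : (k : ℕ) ≠ i) (hk3 : (k : ℕ) ≠ i + 1)
    (x y : Fin n → ℝ) (hy : ∀ j, y j = W.mulVec x j + c)
    (hyk : y k = 0)
    (hyi : α ≤ y ⟨i, by omega⟩)
    (hym : y ⟨i - 1, by omega⟩ ≤ β)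
    (hyp : y ⟨i + 1, by omega⟩ ≤ β)
    (hoff : ∀ j : Fin n, (j : ℕ) ≠ i - 1 → (j : ℕ) ≠ i → (j : ℕ) ≠ i + 1 →
      j ≠ k → y j ≤ 0) :
    (∑ j, W k j * (-(x j) + max (y j) 0)) ≤ 0 := by
  have hI : (⟨i, by omega⟩ : Fin n) ∈ Finset.univ := Finset.mem_univ _
  -- split the sum
  have hsplit : (∑ j, W k j * (-(x j) + max (y j) 0))
      = (-(∑ j, W k j * x j)) + ∑ j, W k j * max (y j) 0 := by
    rw [← Finset.sum_neg_distrib, ← Finset.sum_add_distrib]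
    congr 1; funext j; ring
  -- linear part equals c
  have hmv : W.mulVec x k = ∑ j, W k j * x j := rfl
  have hlin : (∑ j, W k j * x j) = -c := by
    have := hy k; rw [hyk, hmv] at this; linarith
  -- weights are nonpositive
  have hWnonpos : ∀ j : Fin n, W k j ≤ 0 := by
    intro j
    rw [hW]
    split_ifs <;> linarith
  -- the weight at index i
  have hWi : W k ⟨i, by omega⟩ = -1 - δ := by
    rw [hW]
    have h1 : ¬ ((k : ℕ) = i) := hk2
    have h2 : ¬ (((k : ℤ) - (i : ℤ)).natAbs = 1) := by
      intro h
      have := k.isLt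
      omega
    simp [h1, h2]
  -- bound the rectified sum
  have hbound : (∑ j, W k j * max (y j) 0) ≤ (-1 - δ) * α := by
    calc (∑ j, W k j * max (y j) 0)
        ≤ ∑ j, (if j = (⟨i, by omega⟩ : Fin n) then (-1 - δ) * α else 0) := by
          apply Finset.sum_le_sum
          intro j _
          by_cases hj : j = (⟨i, by omega⟩ : Fin n)
          · subst hj
            rw [if_pos rfl, hWi, max_eq_left (le_trans hα hyi)]
            have h0 : -1 - δ ≤ 0 := by linarith
            nlinarith [hyi]
          · simp only [if_neg hj]
            exact mul_nonpos_of_nonpos_of_nonneg (hWnonpos j) (le_max_right _ _)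
      _ = (-1 - δ) * α := by simp
  rw [hsplit, hlin]
  have hcα : c ≤ (1 + δ) * α := by
    rw [div_le_iff₀ (by linarith)] at hfeas
    linarith
  linarith
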